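/- Let I = {i_1,…,i_m} ⊂ {1,…,n} be a set of m distinct indices and let α_1,…,α_m be nonzero scalars. Then P = α_1 x_{i_1} + ⋯ + α_m x_{i_m} is a Darboux polynomial for the Lotka-Volterra system dx_i/dt = x_i(b_i + ∑_j A_{i,j} x_j) if and only if the following three conditions hold: (C1) there exists b such that b_i = b for all i ∈ I; (C2) A_{i,j} = A_{k,j} for all i,k ∈ I and all j ∉ I; (C3) α_h(A_{i_h,i_j} − A_{i_j,i_j}) = α_j(A_{i_h,i_h} − A_{i_j,i_h}) for all h,j ∈ {1,…,m}. -/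

import Mathlib

open MvPolynomial

/-- The Lie derivative of a polynomial `P` along the polynomial vector field `f`. -/
noncomputable def lieDeriv {n : ℕ} (f : Fin n → MvPolynomial (Fin n) ℝ)
    (P : MvPolynomial (Fin n) ℝ) : MvPolynomial (Fin n) ℝ :=
  ∑ i, f i * pderiv i P

/-- `P` is a Darboux polynomial for the vector field `f`. -/
def IsDarboux {n : ℕ} (f : Fin n → MvPolynomial (Fin n) ℝ)
    (P : MvPolynomial (Fin n) ℝ) : Prop :=
  ∃ Ccof : MvPolynomial (Fin n) ℝ, lieDeriv f P = Ccof * P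

/-- The Lotka-Volterra vector field `dx_i/dt = x_i (b_i + ∑_j A_{i,j} x_j)`. -/
noncomputable def LV {n : ℕ} (A : Matrix (Fin n) (Fin n) ℝ) (b : Fin n → ℝ) :
    Fin n → MvPolynomial (Fin n) ℝ :=
  fun i => X i * (C (b i) + ∑ j, C (A i j) * X j)

section helpers
open Finsupp
variable {n m : ℕ}

lemma pair_ne_single (i j k : Fin n) :
    (single i 1 + single j 1 : Fin n →₀ ℕ) ≠ single k 1 := by
  intro h
  have hd := congrArg (Finsupp.sum · fun _ e => e) h
  simp [Finsupp.sum_add_index, Finsupp.sum_single_index] at hd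

lemma pair_eq_pair_iff (i j k l : Fin n) :
    (single i 1 + single j 1 : Fin n →₀ ℕ) = single k 1 + single l 1 ↔
      (i = k ∧ j = l) ∨ (i = l ∧ j = k) := by
  constructor
  · intro h
    by_cases hik : i = k
    · subst hik
      have := add_right_injective (single i 1) h
      exact Or.inl ⟨rfl, (Finsupp.single_left_inj one_ne_zero).mp this⟩
    · have hi := congrArg (fun d => d i) h
      have hli : l = i := by
        by_cases hl : l = i
        · exact hl
        · exfalso
          by_cases hji : j = i <;>
            simp [hji, hl, Ne.symm hik, Finsupp.single_apply, hik] at hi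
      rw [hli, add_comm (single i 1) (single j 1)] at h
      have := add_right_cancel h
      exact Or.inr ⟨hli.symm, (Finsupp.single_left_inj one_ne_zero).mp this⟩
  · rintro (⟨rfl, rfl⟩ | ⟨rfl, rfl⟩)
    · rfl
    · exact add_comm _ _


lemma lieDeriv_lin (f : Fin n → MvPolynomial (Fin n) ℝ) (α : Fin m → ℝ) (v : Fin m → Fin n) :
    lieDeriv f (∑ h, C (α h) * X (v h)) = ∑ h, C (α h) * f (v h) := by
  unfold lieDeriv
  have hp : ∀ i, pderiv i (∑ h, C (α h) * X (v h))
      = ∑ h, C (α h) * if i = v h then 1 else 0 := by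
    intro i
    simp [pderiv_X, Pi.single_apply, eq_comm]
  simp only [hp, Finset.mul_sum]
  rw [Finset.sum_comm]
  refine Finset.sum_congr rfl fun h _ => ?_
  simp [mul_ite, Finset.sum_ite_eq, mul_comm]

lemma CCX (a c : ℝ) (i : Fin n) : C a * (C c * X i) = monomial (single i 1) (a * c) := by
  rw [X, C_apply, C_apply, monomial_mul, monomial_mul, zero_add, zero_add, mul_one]

lemma CCXX (a d : ℝ) (i j : Fin n) :
    C a * (C d * X j * X i) = monomial (single i 1 + single j 1) (a * d) := by
  rw [X, X, C_apply, C_apply, monomial_mul, monomial_mul, monomial_mul, zero_add, mul_one,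
    mul_one, zero_add, add_comm (single j 1)]

lemma expandL (A : Matrix (Fin n) (Fin n) ℝ) (b : Fin n → ℝ) (α : Fin m → ℝ) (v : Fin m → Fin n) :
    lieDeriv (LV A b) (∑ h, C (α h) * X (v h)) =
      (∑ h, monomial (Finsupp.single (v h) 1) (α h * b (v h))) +
      ∑ h, ∑ j, monomial (Finsupp.single (v h) 1 + single j 1) (α h * A (v h) j) := by
  rw [lieDeriv_lin]
  unfold LV
  rw [← Finset.sum_add_distrib]
  refine Finset.sum_congr rfl fun h _ => ?_
  rw [mul_comm (X (v h)), add_mul, Finset.sum_mul, mul_add, Finset.mul_sum]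
  refine congrArg₂ (· + ·) (CCX _ _ _) (Finset.sum_congr rfl fun j _ => CCXX _ _ _ _)

lemma coeffR (α : Fin m → ℝ) (v : Fin m → Fin n) (Ccof : MvPolynomial (Fin n) ℝ) (μ : Fin n →₀ ℕ) :
    coeff μ (Ccof * ∑ h, C (α h) * X (v h)) =
      ∑ h, α h * if v h ∈ μ.support then coeff (μ - Finsupp.single (v h) 1) Ccof else 0 := by
  rw [Finset.mul_sum, coeff_sum]
  refine Finset.sum_congr rfl fun h _ => ?_
  rw [show Ccof * (C (α h) * X (v h)) = C (α h) * (Ccof * X (v h)) by ring,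
    coeff_C_mul, coeff_mul_X']

section fwd
variable {A : Matrix (Fin n) (Fin n) ℝ} {b : Fin n → ℝ} {α : Fin m → ℝ} {v : Fin m → Fin n}
  {Ccof : MvPolynomial (Fin n) ℝ}

lemma fwd1 (hv : Function.Injective v)
    (Heq : lieDeriv (LV A b) (∑ h, C (α h) * X (v h)) = Ccof * (∑ h, C (α h) * X (v h)))
    (h0 : Fin m) : α h0 * b (v h0) = α h0 * coeff 0 Ccof := by
  rw [expandL] at Heq
  have := congrArg (coeff (single (v h0) 1)) Heq
  rw [coeffR] at this
  simpa [coeff_sum, coeff_monomial, Finsupp.single_left_inj (one_ne_zero (α := ℕ)),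
    hv.eq_iff, pair_ne_single, Finsupp.support_single_ne_zero,
    Finset.sum_ite_eq', eq_comm (a := v _)] using this

lemma ite_or_split (p q : Prop) [Decidable p] [Decidable q] (c : ℝ) (hpq : ¬(p ∧ q)) :
    (if p ∨ q then c else 0) = (if p then c else 0) + (if q then c else 0) := by
  by_cases hp : p <;> by_cases hq : q
  · exact absurd ⟨hp, hq⟩ hpq
  all_goals simp [hp, hq]

lemma fwd2 (hv : Function.Injective v)
    (Heq : lieDeriv (LV A b) (∑ h, C (α h) * X (v h)) = Ccof * (∑ h, C (α h) * X (v h)))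
    (h0 : Fin m) (j0 : Fin n) (hj0 : ∀ l, v l ≠ j0) :
    α h0 * A (v h0) j0 = α h0 * coeff (single j0 1) Ccof := by
  rw [expandL] at Heq
  have key := congrArg (coeff (single (v h0) 1 + single j0 1)) Heq
  rw [coeffR] at key
  have hsupp : (single (v h0) 1 + single j0 1 : Fin n →₀ ℕ).support = {v h0} ∪ {j0} := by
    rw [Finsupp.support_add_eq, Finsupp.support_single_ne_zero _ one_ne_zero,
      Finsupp.support_single_ne_zero _ one_ne_zero]
    simp [Finsupp.support_single_ne_zero _ one_ne_zero, Ne.symm (hj0 h0)]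
    exact hj0 h0
  simpa [coeff_sum, coeff_monomial, pair_eq_pair_iff, hv.eq_iff, hj0,
    (fun h => Ne.symm (pair_ne_single (v h0) j0 (v h)) : ∀ h : Fin m, _),
    hsupp, ite_and, Finset.sum_ite_eq', add_tsub_cancel_left, Ne.symm (hj0 h0)] using key

lemma fwd3diag (hv : Function.Injective v)
    (Heq : lieDeriv (LV A b) (∑ h, C (α h) * X (v h)) = Ccof * (∑ h, C (α h) * X (v h)))
    (h0 : Fin m) :
    α h0 * A (v h0) (v h0) = α h0 * coeff (single (v h0) 1) Ccof := by
  rw [expandL] at Heq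
  have key := congrArg (coeff (single (v h0) 1 + single (v h0) 1)) Heq
  rw [coeffR] at key
  have hsupp : (single (v h0) 1 + single (v h0) 1 : Fin n →₀ ℕ).support = {v h0} := by
    rw [← Finsupp.single_add, Finsupp.support_single_ne_zero _ (by norm_num)]
  simpa [coeff_sum, coeff_monomial, pair_eq_pair_iff, hv.eq_iff,
    (fun h => Ne.symm (pair_ne_single (v h0) (v h0) (v h)) : ∀ h : Fin m, _),
    hsupp, ite_and, Finset.sum_ite_eq', add_tsub_cancel_left] using key

lemma fwd3off (hv : Function.Injective v)
    (Heq : lieDeriv (LV A b) (∑ h, C (α h) * X (v h)) = Ccof * (∑ h, C (α h) * X (v h)))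
    (h0 k0 : Fin m) (hne : h0 ≠ k0) :
    α h0 * A (v h0) (v k0) + α k0 * A (v k0) (v h0) =
      α h0 * coeff (single (v k0) 1) Ccof + α k0 * coeff (single (v h0) 1) Ccof := by
  rw [expandL] at Heq
  have key := congrArg (coeff (single (v h0) 1 + single (v k0) 1)) Heq
  rw [coeffR] at key
  have hvne : v h0 ≠ v k0 := fun h => hne (hv h)
  have hsupp : (single (v h0) 1 + single (v k0) 1 : Fin n →₀ ℕ).support = {v h0} ∪ {v k0} := by
    rw [Finsupp.support_add_eq, Finsupp.support_single_ne_zero _ one_ne_zero,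
      Finsupp.support_single_ne_zero _ one_ne_zero]
    simp [Finsupp.support_single_ne_zero _ one_ne_zero, hvne.symm]
    exact hvne
  have hsub : (single (v h0) 1 + single (v k0) 1 : Fin n →₀ ℕ) - single (v k0) 1
      = single (v h0) 1 := add_tsub_cancel_right _ _
  have split2 : ∀ (h : Fin m) (j : Fin n),
      (if (h = h0 ∧ j = v k0) ∨ (h = k0 ∧ j = v h0) then α h * A (v h) j else 0)
        = (if h = h0 ∧ j = v k0 then α h * A (v h) j else 0)
          + (if h = k0 ∧ j = v h0 then α h * A (v h) j else 0) := by
    intro h j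
    exact ite_or_split _ _ _ (by rintro ⟨⟨rfl, rfl⟩, ⟨h1, h2⟩⟩; exact hne h1)
  have split1 : ∀ h : Fin m,
      (if h = h0 ∨ h = k0 then α h * coeff (single (v h0) 1 + single (v k0) 1 - Finsupp.single (v h) 1) Ccof else 0)
        = (if h = h0 then α h * coeff (single (v h0) 1 + single (v k0) 1 - Finsupp.single (v h) 1) Ccof else 0)
          + (if h = k0 then α h * coeff (single (v h0) 1 + single (v k0) 1 - Finsupp.single (v h) 1) Ccof else 0) := by
    intro h
    exact ite_or_split _ _ _ (by rintro ⟨rfl, rfl⟩; exact hne rfl)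
  simp only [coeff_sum, coeff_add, coeff_monomial, pair_eq_pair_iff, hv.eq_iff, hsupp,
    Finset.mem_union, Finset.mem_singleton, hv.eq_iff] at key
  simp only [mul_ite, mul_zero] at key
  simp only [split2, split1, Finset.sum_add_distrib] at key
  simp only [ite_and] at key
  simp [Finset.sum_ite_eq', add_tsub_cancel_left, hsub,
    (fun x => Ne.symm (pair_ne_single (v h0) (v k0) (v x)) : ∀ x : Fin m, _)] at key
  linarith [key]

end fwd


section bwd
open Classical in
lemma bwd (A : Matrix (Fin n) (Fin n) ℝ) (α : Fin m → ℝ) (v : Fin m → Fin n)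
    (hv : Function.Injective v) [Nonempty (Fin m)] (b0 : ℝ)
    (hC2 : ∀ h k : Fin m, ∀ j : Fin n, (∀ l : Fin m, v l ≠ j) → A (v h) j = A (v k) j)
    (hC3 : ∀ h j : Fin m, α h * (A (v h) (v j) - A (v j) (v j))
      = α j * (A (v h) (v h) - A (v j) (v h))) :
    ∃ Ccof : MvPolynomial (Fin n) ℝ, Ccof.totalDegree ≤ 1 ∧
      ((∑ h, monomial (Finsupp.single (v h) 1) (α h * b0)) +
        ∑ h, ∑ j, monomial (Finsupp.single (v h) 1 + single j 1) (α h * A (v h) j))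
        = Ccof * (∑ h, C (α h) * X (v h)) := by
  classical
  set h0 : Fin m := Classical.arbitrary (Fin m) with hh0
  set c : Fin n → ℝ := fun j => if ∃ k, v k = j then A j j else A (v h0) j with hc
  refine ⟨C b0 + ∑ j, C (c j) * X j, ?_, ?_⟩
  · refine le_trans (totalDegree_add _ _) (max_le (by simp) ?_)
    refine le_trans (totalDegree_finset_sum _ _) (Finset.sup_le fun j _ => ?_)
    refine le_trans (totalDegree_mul _ _) ?_
    simp [totalDegree_X]
  · have hR : (C b0 + ∑ j, C (c j) * X j) * (∑ h, C (α h) * X (v h)) =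
        (∑ h, monomial (Finsupp.single (v h) 1) (α h * b0)) +
          ∑ h, ∑ j, monomial (Finsupp.single (v h) 1 + single j 1) (α h * c j) := by
      rw [add_mul, Finset.mul_sum]
      refine congrArg₂ (· + ·) (Finset.sum_congr rfl fun h _ => ?_) ?_
      · rw [show C b0 * (C (α h) * X (v h)) = C (α h) * (C b0 * X (v h)) by ring, CCX]
      · rw [Finset.sum_mul]
        simp only [Finset.mul_sum]
        rw [Finset.sum_comm]
        refine Finset.sum_congr rfl fun h _ => Finset.sum_congr rfl fun j _ => ?_
        rw [show (C (c j) * X j) * (C (α h) * X (v h)) = C (α h) * (C (c j) * X j * X (v h))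
          by ring, CCXX]
    rw [hR, add_right_inj, ← sub_eq_zero, ← Finset.sum_sub_distrib]
    simp only [← Finset.sum_sub_distrib, ← map_sub, ← mul_sub]
    have hsplit : ∀ h : Fin m,
        (∑ j, monomial (Finsupp.single (v h) 1 + single j 1) (α h * (A (v h) j - c j)))
          = ∑ k, monomial (Finsupp.single (v h) 1 + single (v k) 1)
              (α h * (A (v h) (v k) - A (v k) (v k))) := by
      intro h
      rw [← Finset.sum_add_sum_compl (Finset.image v Finset.univ)]
      have h2 : (∑ j ∈ (Finset.image v Finset.univ)ᶜ,
          monomial (Finsupp.single (v h) 1 + single j 1) (α h * (A (v h) j - c j))) = 0 := by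
        refine Finset.sum_eq_zero fun j hj => ?_
        have hj' : ∀ l : Fin m, v l ≠ j := by
          simpa [Finset.mem_compl, Finset.mem_image] using hj
        have hcj : c j = A (v h0) j := by
          rw [hc]
          exact if_neg (by push_neg; exact fun k => hj' k)
        rw [hcj, hC2 h h0 j hj', sub_self, mul_zero, monomial_zero]
      rw [h2, add_zero, Finset.sum_image (fun a _ b _ hab => hv hab)]
      refine Finset.sum_congr rfl fun k _ => ?_
      have : c (v k) = A (v k) (v k) := by rw [hc]; exact if_pos ⟨k, rfl⟩
      rw [this]
    rw [Finset.sum_congr rfl fun h _ => hsplit h]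
    set T := ∑ h, ∑ k, monomial (Finsupp.single (v h) 1 + single (v k) 1)
      (α h * (A (v h) (v k) - A (v k) (v k))) with hTdef
    have hT : T = -T := by
      calc T = ∑ h, ∑ k, -(monomial (Finsupp.single (v h) 1 + single (v k) 1)
            (α k * (A (v k) (v h) - A (v h) (v h)))) := by
            refine Finset.sum_congr rfl fun h _ => Finset.sum_congr rfl fun k _ => ?_
            rw [← map_neg]
            congr 1
            linear_combination hC3 h k
        _ = -∑ h, ∑ k, monomial (Finsupp.single (v h) 1 + single (v k) 1)
            (α k * (A (v k) (v h) - A (v h) (v h))) := by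
            simp [Finset.sum_neg_distrib]
        _ = -T := by
            rw [Finset.sum_comm, hTdef]
            congr 1
            refine Finset.sum_congr rfl fun k _ => Finset.sum_congr rfl fun h _ => ?_
            rw [add_comm (single (v k) 1)]
    have h2T : (2 : MvPolynomial (Fin n) ℝ) * T = 0 := by
      rw [two_mul]
      nth_rewrite 2 [hT]
      rw [add_neg_cancel]
    rcases mul_eq_zero.mp h2T with h | h
    · norm_num at h
    · exact h
end bwd

end helpers

/-- Lemma 1: `P = α_1 x_{i_1} + ⋯ + α_m x_{i_m}` (distinct indices, nonzero
coefficients) is a Darboux polynomial (with affine cofactor) for the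
Lotka-Volterra system iff conditions (C1), (C2) and (C3) hold. -/
theorem mDP_iff {n m : ℕ} (A : Matrix (Fin n) (Fin n) ℝ) (b : Fin n → ℝ)
    (v : Fin m → Fin n) (hv : Function.Injective v)
    (α : Fin m → ℝ) (hα : ∀ j, α j ≠ 0) :
    (∃ Ccof : MvPolynomial (Fin n) ℝ, Ccof.totalDegree ≤ 1 ∧
        lieDeriv (LV A b) (∑ h, C (α h) * X (v h)) =
          Ccof * (∑ h, C (α h) * X (v h))) ↔
      ((∃ b0 : ℝ, ∀ h : Fin m, b (v h) = b0) ∧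
        (∀ h k : Fin m, ∀ j : Fin n, (∀ l : Fin m, v l ≠ j) →
          A (v h) j = A (v k) j) ∧
        (∀ h j : Fin m,
          α h * (A (v h) (v j) - A (v j) (v j)) =
            α j * (A (v h) (v h) - A (v j) (v h)))) := by
  constructor
  · rintro ⟨Ccof, hdeg, Heq⟩
    refine ⟨⟨coeff 0 Ccof, fun h => mul_left_cancel₀ (hα h) (fwd1 hv Heq h)⟩, ?_, ?_⟩
    · intro h k j hj
      have h1 := mul_left_cancel₀ (hα h) (fwd2 hv Heq h j hj)
      have h2 := mul_left_cancel₀ (hα k) (fwd2 hv Heq k j hj)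
      rw [h1, h2]
    · intro h j
      rcases eq_or_ne h j with rfl | hne
      · ring
      · have ch := mul_left_cancel₀ (hα h) (fwd3diag hv Heq h)
        have cj := mul_left_cancel₀ (hα j) (fwd3diag hv Heq j)
        have off := fwd3off hv Heq h j hne
        rw [← ch, ← cj] at off
        linear_combination off
  · rintro ⟨⟨b0, hb⟩, hC2, hC3⟩
    rcases isEmpty_or_nonempty (Fin m) with hm | hm
    · refine ⟨0, by simp, ?_⟩
      simp [lieDeriv, Finset.univ_eq_empty]
    · obtain ⟨Ccof, h1, h2⟩ := bwd A α v hv b0 hC2 hC3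
      refine ⟨Ccof, h1, ?_⟩
      rw [expandL,
        show (∑ h, monomial (Finsupp.single (v h) 1) (α h * b (v h)))
            = ∑ h, monomial (Finsupp.single (v h) 1) (α h * b0) from
          Finset.sum_congr rfl fun h _ => by rw [hb h]]
      exact h2
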